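/- (Plasticity of mixed weighted closed hexahedra.) Let A_0 be a point of ℝ³ and A_1, …, A_5 points distinct from A_0 with u_i = u(A_0, A_i); assume u_1, u_2 are linearly independent, and similarly for the pairs (u_1, u_3) and (u_2, u_3). Let B̄_1, …, B̄_5 > 0 satisfy the balance condition Σ_{i=1}^5 B̄_i u_i = 0 (so A_0 is the weighted Fermat–Torricelli point in the floating case), together with Σ_{i=1}^5 B̄_i = c and B̄_1 + B̄_2 + B̄_3 + B̄_5 = B̄_4 + B̄_0. Then B̄_4 = (c − B̄_0)/2, and with n_{pq} a unit normal to span{u_p, u_q}: whenever ⟨u_3, n_{12}⟩ ≠ 0 and ⟨u_4, n_{12}⟩ ≠ 0, B̄_3/B̄_4 = −(⟨u_4, n_{12}⟩/⟨u_3, n_{12}⟩)·(1 + (B̄_5/B̄_4)·(⟨u_5, n_{12}⟩/⟨u_4, n_{12}⟩)); whenever ⟨u_2, n_{13}⟩ ≠ 0 and ⟨u_4, n_{13}⟩ ≠ 0, B̄_2/B̄_4 = −(⟨u_4, n_{13}⟩/⟨u_2, n_{13}⟩)·(1 + (B̄_5/B̄_4)·(⟨u_5, n_{13}⟩/⟨u_4,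 n_{13}⟩)); and whenever ⟨u_1, n_{23}⟩ ≠ 0 and ⟨u_4, n_{23}⟩ ≠ 0, B̄_1/B̄_4 = −(⟨u_4, n_{23}⟩/⟨u_1, n_{23}⟩)·(1 + (B̄_5/B̄_4)·(⟨u_5, n_{23}⟩/⟨u_4, n_{23}⟩)). (Here the signed component ⟨u_r, n_{pq}⟩ equals sgn_{r,p0q}·sin α_{r,p0q} in the paper's notation.) -/

import Mathlib

open RealInnerProductSpace

/-- Plasticity of mixed weighted closed hexahedra: under the balance condition
`∑ B̄ᵢ uᵢ = 0` at `A₀`, with `∑ B̄ᵢ = c` and `B̄₁+B̄₂+B̄₃+B̄₅ = B̄₄+B̄₀`, one has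
`B̄₄ = (c − B̄₀)/2` and the three plasticity equations expressing `B̄₃/B̄₄`,
`B̄₂/B̄₄`, `B̄₁/B̄₄` through signed normal components. Indices are shifted:
`A 0, …, A 4` are `A₁, …, A₅`. -/
theorem plasticity_mixed_weighted_closed_hexahedron
    (A : Fin 5 → EuclideanSpace ℝ (Fin 3))
    (A₀ : EuclideanSpace ℝ (Fin 3))
    (hne : ∀ i, A i ≠ A₀)
    (u : Fin 5 → EuclideanSpace ℝ (Fin 3))
    (hu : ∀ i, u i = ‖A i - A₀‖⁻¹ • (A i - A₀))
    (hind12 : LinearIndependent ℝ ![u 0, u 1])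
    (hind13 : LinearIndependent ℝ ![u 0, u 2])
    (hind23 : LinearIndependent ℝ ![u 1, u 2])
    (B : Fin 5 → ℝ) (hB : ∀ i, 0 < B i)
    (hbal : ∑ i, B i • u i = 0)
    (c B₀ : ℝ)
    (hsum : ∑ i, B i = c)
    (hflow : B 0 + B 1 + B 2 + B 4 = B 3 + B₀)
    (n12 n13 n23 : EuclideanSpace ℝ (Fin 3))
    (hn12 : ‖n12‖ = 1 ∧ ⟪u 0, n12⟫ = 0 ∧ ⟪u 1, n12⟫ = 0)
    (hn13 : ‖n13‖ = 1 ∧ ⟪u 0, n13⟫ = 0 ∧ ⟪u 2, n13⟫ = 0)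
    (hn23 : ‖n23‖ = 1 ∧ ⟪u 1, n23⟫ = 0 ∧ ⟪u 2, n23⟫ = 0) :
    B 3 = (c - B₀) / 2 ∧
    (⟪u 2, n12⟫ ≠ 0 → ⟪u 3, n12⟫ ≠ 0 →
      B 2 / B 3 = -(⟪u 3, n12⟫ / ⟪u 2, n12⟫)
        * (1 + (B 4 / B 3) * (⟪u 4, n12⟫ / ⟪u 3, n12⟫))) ∧
    (⟪u 1, n13⟫ ≠ 0 → ⟪u 3, n13⟫ ≠ 0 →
      B 1 / B 3 = -(⟪u 3, n13⟫ / ⟪u 1, n13⟫)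
        * (1 + (B 4 / B 3) * (⟪u 4, n13⟫ / ⟪u 3, n13⟫))) ∧
    (⟪u 0, n23⟫ ≠ 0 → ⟪u 3, n23⟫ ≠ 0 →
      B 0 / B 3 = -(⟪u 3, n23⟫ / ⟪u 0, n23⟫)
        * (1 + (B 4 / B 3) * (⟪u 4, n23⟫ / ⟪u 3, n23⟫))) := by

  have key : ∀ n : EuclideanSpace ℝ (Fin 3),
      ∑ i, B i * ⟪u i, n⟫ = 0 := by
    intro n
    have : ⟪∑ i, B i • u i, n⟫ = (0:ℝ) := by rw [hbal]; exact inner_zero_left n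
    rw [sum_inner] at this
    simp only [real_inner_smul_left] at this
    exact this
  have hB3 : B 3 ≠ 0 := (hB 3).ne'
  have hB3' : B 3 = (c - B₀) / 2 := by
    have h1 : B 0 + B 1 + B 2 + B 3 + B 4 = c := by
      simpa [Fin.sum_univ_five] using hsum
    linarith
  refine ⟨hB3', ?_, ?_, ?_⟩
  · intro h2 h3
    have h := key n12
    rw [Fin.sum_univ_five, hn12.2.1, hn12.2.2] at h
    set a := ⟪u 2, n12⟫; set b := ⟪u 3, n12⟫; set d := ⟪u 4, n12⟫
    field_simp
    linear_combination h
  · intro h2 h3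
    have h := key n13
    rw [Fin.sum_univ_five, hn13.2.1, hn13.2.2] at h
    set a := ⟪u 1, n13⟫; set b := ⟪u 3, n13⟫; set d := ⟪u 4, n13⟫
    field_simp
    linear_combination h
  · intro h2 h3
    have h := key n23
    rw [Fin.sum_univ_five, hn23.2.1, hn23.2.2] at h
    set a := ⟪u 0, n23⟫; set b := ⟪u 3, n23⟫; set d := ⟪u 4, n23⟫
    field_simp
    linear_combination h
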